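/- Let m ≥ 1, let l₁, …, l_m ∈ ℝ be fixed logits, and let y ∈ Fin m. Then the single-sample temperature-scaled log-likelihood T ↦ log( exp(l_y / T) / ∑_{j=1}^m exp(l_j / T) ) is a unimodal (quasiconcave) function of T on (0, ∞): for all 0 < T₁ ≤ T₂ ≤ T₃, its value at T₂ is at least the minimum of its values at T₁ and T₃. -/

import Mathlib

open Real

private lemma exp_mul_convex (c : ℝ) :
    ConvexOn ℝ Set.univ (fun s : ℝ => Real.exp (c * s)) := by
  have := convexOn_exp.comp_affineMap (LinearMap.toAffineMap ((c : ℝ) • (LinearMap.id : ℝ →ₗ[ℝ] ℝ)))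
  simpa [Function.comp_def, Pi.smul_apply, smul_eq_mul] using this

private lemma sum_exp_convex (m : ℕ) (d : Fin m → ℝ) :
    ConvexOn ℝ Set.univ (fun s : ℝ => ∑ j : Fin m, Real.exp (d j * s)) := by
  induction (Finset.univ : Finset (Fin m)) using Finset.induction with
  | empty => simpa using convexOn_const (0:ℝ) convex_univ
  | @insert a t ha ih =>
    simp only [Finset.sum_insert ha]
    exact (exp_mul_convex (d a)).add ih

private lemma loglik_eq (m : ℕ) (hm : 1 ≤ m) (l : Fin m → ℝ) (y : Fin m) (T : ℝ) (hT : 0 < T) :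
    Real.log (Real.exp (l y / T) / ∑ j : Fin m, Real.exp (l j / T)) =
      - Real.log (∑ j : Fin m, Real.exp ((l j - l y) * (1 / T))) := by
  have hF : (0:ℝ) < ∑ j : Fin m, Real.exp ((l j - l y) * (1 / T)) := by
    have : Nonempty (Fin m) := Fin.pos_iff_nonempty.mp hm
    exact Finset.sum_pos (fun j _ => Real.exp_pos _) Finset.univ_nonempty
  have hsum : (∑ j : Fin m, Real.exp (l j / T)) =
      Real.exp (l y / T) * ∑ j : Fin m, Real.exp ((l j - l y) * (1 / T)) := by
    rw [Finset.mul_sum]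
    refine Finset.sum_congr rfl fun j _ => ?_
    rw [← Real.exp_add]
    congr 1
    field_simp
    ring
  rw [hsum, div_mul_eq_div_div, div_self (Real.exp_ne_zero _), Real.log_div one_ne_zero hF.ne',
    Real.log_one, zero_sub]

theorem single_sample_log_likelihood_unimodal
    (m : ℕ) (hm : 1 ≤ m) (l : Fin m → ℝ) (y : Fin m) :
    ∀ T₁ T₂ T₃ : ℝ, 0 < T₁ → T₁ ≤ T₂ → T₂ ≤ T₃ →
      min (Real.log (Real.exp (l y / T₁) / ∑ j : Fin m, Real.exp (l j / T₁)))
          (Real.log (Real.exp (l y / T₃) / ∑ j : Fin m, Real.exp (l j / T₃))) ≤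
        Real.log (Real.exp (l y / T₂) / ∑ j : Fin m, Real.exp (l j / T₂)) := by
  intro T₁ T₂ T₃ h1 h12 h23
  have h2 : 0 < T₂ := lt_of_lt_of_le h1 h12
  have h3 : 0 < T₃ := lt_of_lt_of_le h2 h23
  set F : ℝ → ℝ := fun s => ∑ j : Fin m, Real.exp ((l j - l y) * s) with hFdef
  have hFpos : ∀ s, 0 < F s := fun s => by
    have : Nonempty (Fin m) := Fin.pos_iff_nonempty.mp hm
    exact Finset.sum_pos (fun j _ => Real.exp_pos _) Finset.univ_nonempty
  rw [loglik_eq m hm l y T₁ h1, loglik_eq m hm l y T₂ h2, loglik_eq m hm l y T₃ h3]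
  have hconv := sum_exp_convex m (fun j => l j - l y)
  have hseg : (1/T₂ : ℝ) ∈ segment ℝ (1/T₃) (1/T₁) := by
    rw [segment_eq_Icc (one_div_le_one_div_of_le h1 (h12.trans h23))]
    exact ⟨one_div_le_one_div_of_le h2 h23, one_div_le_one_div_of_le h1 h12⟩
  have hmax : F (1/T₂) ≤ max (F (1/T₃)) (F (1/T₁)) :=
    hconv.le_on_segment (Set.mem_univ _) (Set.mem_univ _) hseg
  have hlog : Real.log (F (1/T₂)) ≤ max (Real.log (F (1/T₃))) (Real.log (F (1/T₁))) := by
    rcases le_total (F (1/T₃)) (F (1/T₁)) with h | h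
    · exact le_max_of_le_right (Real.log_le_log (hFpos _) (by rwa [max_eq_right h] at hmax))
    · exact le_max_of_le_left (Real.log_le_log (hFpos _) (by rwa [max_eq_left h] at hmax))
  rw [min_comm]
  simpa [min_neg_neg, max_comm] using neg_le_neg hlog
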